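/- Let G be a finite simple graph and let W be any subset of V(G). Then 𝓜(S(G)−W, x) = x^{|E(G)|−|V(G)|+|W|} · f(x), where f(x) is the polynomial obtained from the multivariate matching polynomial 𝔐(G−W, x_{G−W}) by substituting x_v := x² − d_G(v) for every vertex v ∈ V(G)∖W (here d_G(v) is the degree of v in G, not in G−W). -/

import Mathlib

namespace LM

open Finset

variable {V : Type*}

/-- The set of matchings of `G`, as finsets of edges that pairwise share no vertex. -/
def matchings [Fintype V] [DecidableEq V] (G : SimpleGraph V) [DecidableRel G.Adj] :
    Finset (Finset (Sym2 V)) :=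
  G.edgeFinset.powerset.filter
    (fun M => ∀ e ∈ M, ∀ f ∈ M, e ≠ f → ∀ w : V, w ∈ e → w ∉ f)

/-- The set of vertices covered by a set of edges. -/
def covered [Fintype V] [DecidableEq V] (M : Finset (Sym2 V)) : Finset V :=
  Finset.univ.filter (fun v => ∃ e ∈ M, v ∈ e)

/-- The multivariate matching polynomial `𝔐(G, x_G)`. -/
noncomputable def mvMatch [Fintype V] [DecidableEq V] (G : SimpleGraph V)
    [DecidableRel G.Adj] : MvPolynomial V ℝ :=
  ∑ M ∈ matchings G, (-1 : MvPolynomial V ℝ) ^ M.card *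
    ∏ v ∈ Finset.univ \ covered M, MvPolynomial.X v

/-- The matching polynomial `𝓜(G, x)`. -/
noncomputable def matchPoly [Fintype V] [DecidableEq V] (G : SimpleGraph V)
    [DecidableRel G.Adj] : Polynomial ℝ :=
  ∑ M ∈ matchings G, (-1 : Polynomial ℝ) ^ M.card *
    Polynomial.X ^ (Fintype.card V - 2 * M.card)

/-- The Laplacian matching polynomial `𝓛𝓜(G, x)`. -/
noncomputable def lapMatch [Fintype V] [DecidableEq V] (G : SimpleGraph V)
    [DecidableRel G.Adj] : Polynomial ℝ :=
  ∑ M ∈ matchings G, (-1 : Polynomial ℝ) ^ M.card *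
    ∏ v ∈ Finset.univ \ covered M, (Polynomial.X - Polynomial.C (G.degree v : ℝ))

/-- The largest real root of a polynomial (`sSup` of its set of real roots). -/
noncomputable def lroot (p : Polynomial ℝ) : ℝ := sSup {x : ℝ | p.IsRoot x}

instance instDecidableRelInduceAdj (G : SimpleGraph V) [DecidableRel G.Adj] (s : Set V) :
    DecidableRel (G.induce s).Adj := fun a b =>
  inferInstanceAs (Decidable (G.Adj a b))

/-- The relation underlying the subdivision of `G`: an original vertex `a` is joined to the
new vertex `v_e` of every edge `e` incident with `a`. -/
def sdRel (G : SimpleGraph V) (x y : V ⊕ G.edgeSet) : Prop :=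
  ∃ (a : V) (e : G.edgeSet), x = Sum.inl a ∧ y = Sum.inr e ∧ a ∈ (e : Sym2 V)

instance [Fintype V] [DecidableEq V] (G : SimpleGraph V) [DecidableRel G.Adj]
    (x y : V ⊕ G.edgeSet) : Decidable (sdRel G x y) :=
  inferInstanceAs (Decidable (∃ (_ : V) (_ : G.edgeSet), _ ∧ _ ∧ _))

/-- The subdivision `S(G)` of `G`: every edge `e = {a, b}` is replaced by a new vertex `v_e`
together with the two edges `{a, v_e}` and `{v_e, b}`. -/
def subdivision (G : SimpleGraph V) : SimpleGraph (V ⊕ G.edgeSet) :=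
  SimpleGraph.fromRel (sdRel G)

instance [Fintype V] [DecidableEq V] (G : SimpleGraph V) [DecidableRel G.Adj] :
    DecidableRel (subdivision G).Adj := fun x y =>
  inferInstanceAs (Decidable (x ≠ y ∧ (sdRel G x y ∨ sdRel G y x)))

/-! ### Auxiliary lemmas -/

section Aux

variable [Fintype V] [DecidableEq V]

lemma mem_matchings {G : SimpleGraph V} [DecidableRel G.Adj] {M : Finset (Sym2 V)} :
    M ∈ matchings G ↔ M ⊆ G.edgeFinset ∧
      ∀ e ∈ M, ∀ f ∈ M, e ≠ f → ∀ w : V, w ∈ e → w ∉ f := by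
  simp [matchings]

lemma mem_covered {M : Finset (Sym2 V)} {v : V} : v ∈ covered M ↔ ∃ e ∈ M, v ∈ e := by
  simp [covered]

lemma covered_insert (z : Sym2 V) (M : Finset (Sym2 V)) :
    covered (insert z M) = univ.filter (· ∈ z) ∪ covered M := by
  ext v
  simp only [mem_covered, mem_union, mem_filter, mem_univ, true_and, mem_insert]
  constructor
  · rintro ⟨e, (rfl | he), hv⟩
    · exact Or.inl hv
    · exact Or.inr ⟨e, he, hv⟩
  · rintro (hv | ⟨e, he, hv⟩)
    · exact ⟨z, Or.inl rfl, hv⟩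
    · exact ⟨e, Or.inr he, hv⟩

lemma filter_mem_sym2 {a b : V} : (univ.filter (· ∈ s(a, b))) = {a, b} := by
  ext v; simp [Sym2.mem_iff]

lemma card_filter_mem_sym2 {z : Sym2 V} (hz : ¬ z.IsDiag) :
    (univ.filter (· ∈ z)).card = 2 := by
  induction z using Sym2.inductionOn with
  | hf a b =>
    rw [Sym2.mk_isDiag_iff] at hz
    rw [filter_mem_sym2, card_insert_of_notMem (by simp [hz]), card_singleton]

lemma card_covered {M : Finset (Sym2 V)} (hd : ∀ e ∈ M, ¬ e.IsDiag)
    (hm : ∀ e ∈ M, ∀ f ∈ M, e ≠ f → ∀ w : V, w ∈ e → w ∉ f) :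
    (covered M).card = 2 * M.card := by
  induction M using Finset.induction_on with
  | empty => simp [covered]
  | @insert z M hzM ih =>
    have hdisj : Disjoint (univ.filter (· ∈ z)) (covered M) := by
      rw [disjoint_left]
      intro v hv hv'
      rw [mem_filter] at hv
      rw [mem_covered] at hv'
      obtain ⟨e, he, hve⟩ := hv'
      exact hm z (mem_insert_self _ _) e (mem_insert_of_mem he)
        (fun h => hzM (h ▸ he)) v hv.2 hve
    rw [covered_insert, card_union_of_disjoint hdisj,
      card_filter_mem_sym2 (hd z (mem_insert_self _ _)),
      ih (fun e he => hd e (mem_insert_of_mem he))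
        (fun e he f hf => hm e (mem_insert_of_mem he) f (mem_insert_of_mem hf)),
      card_insert_of_notMem hzM]
    ring

lemma sum_neg_one_pow {R : Type*} [CommRing R] {α : Type*} [DecidableEq α] (s : Finset α) :
    (∑ t ∈ s.powerset, (-1 : R) ^ t.card) = if s = ∅ then 1 else 0 := by
  induction s using Finset.induction_on with
  | empty => simp
  | @insert a s ha ih =>
    rw [Finset.powerset_insert, Finset.sum_union, Finset.sum_image]
    · have h1 : ∀ t ∈ s.powerset, (-1 : R) ^ (insert a t).card = -(-1 : R) ^ t.card := by
        intro t ht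
        rw [Finset.card_insert_of_notMem (fun h => ha ((Finset.mem_powerset.1 ht) h))]
        ring
      rw [Finset.sum_congr rfl h1, Finset.sum_neg_distrib]
      simp [ha]
    · intro t ht u hu h
      have hat : a ∉ t := fun h' => ha ((Finset.mem_powerset.1 ht) h')
      have hau : a ∉ u := fun h' => ha ((Finset.mem_powerset.1 hu) h')
      have := congrArg (Finset.erase · a) h
      simpa [Finset.erase_insert hat, Finset.erase_insert hau] using this
    · rw [Finset.disjoint_left]
      intro t ht ht'
      obtain ⟨u, hu, rfl⟩ := Finset.mem_image.1 ht'
      exact ha ((Finset.mem_powerset.1 ht) (Finset.mem_insert_self a u))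

end Aux

/-! ### Flags -/

section Flags

variable [Fintype V] [DecidableEq V]

/-- vertices outside `W`. -/
def outW (W : Finset V) : Finset V := univ.filter (fun v => v ∉ W)

/-- Vertex-functional flag sets supported on `s`. -/
def goodFlags (G : SimpleGraph V) [DecidableRel G.Adj] (s : Finset V) :
    Finset (Finset (V × Sym2 V)) :=
  (univ : Finset (Finset (V × Sym2 V))).filter
    (fun P => ∀ p ∈ P, (p.1 ∈ s ∧ p.2 ∈ G.incidenceFinset p.1) ∧
      ∀ q ∈ P, p.1 = q.1 → p = q)

/-- The flags of a set of edges. -/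
def flagsOf (n : Finset (Sym2 V)) : Finset (V × Sym2 V) :=
  (univ : Finset (V × Sym2 V)).filter (fun p => p.2 ∈ n ∧ p.1 ∈ p.2)

/-- The doubled edges of a flag set. -/
def doubled (G : SimpleGraph V) [DecidableRel G.Adj] (P : Finset (V × Sym2 V)) :
    Finset (Sym2 V) :=
  G.edgeFinset.filter (fun e => ∀ v ∈ e, (v, e) ∈ P)

variable {G : SimpleGraph V} [DecidableRel G.Adj]

lemma mem_goodFlags {s : Finset V} {P : Finset (V × Sym2 V)} :
    P ∈ goodFlags G s ↔ (∀ p ∈ P, p.1 ∈ s ∧ p.2 ∈ G.incidenceFinset p.1) ∧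
      ∀ p ∈ P, ∀ q ∈ P, p.1 = q.1 → p = q := by
  rw [goodFlags, mem_filter]
  simp only [mem_univ, true_and]
  exact ⟨fun h => ⟨fun p hp => (h p hp).1, fun p hp q hq => (h p hp).2 q hq⟩,
    fun h p hp => ⟨h.1 p hp, fun q hq => h.2 p hp q hq⟩⟩

lemma card_le_of_goodFlags {s : Finset V} {P : Finset (V × Sym2 V)}
    (hP : P ∈ goodFlags G s) : P.card ≤ s.card := by
  rw [mem_goodFlags] at hP
  exact card_le_card_of_injOn (fun p => p.1) (fun p hp => (hP.1 p hp).1)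
    (fun p hp q hq h => hP.2 p hp q hq h)

lemma goodFlags_empty : goodFlags G (∅ : Finset V) = {∅} := by
  ext P
  simp only [mem_goodFlags, mem_singleton]
  constructor
  · rintro ⟨h1, -⟩
    rw [eq_empty_iff_forall_notMem]
    intro p hp
    exact notMem_empty _ (h1 p hp).1
  · rintro rfl
    simp

lemma goodFlags_insert {s : Finset V} {a : V} (ha : a ∉ s) :
    goodFlags G (insert a s) = goodFlags G s ∪
      ((G.incidenceFinset a ×ˢ goodFlags G s).image (fun q => insert (a, q.1) q.2)) := by
  ext P
  simp only [mem_union, mem_image, mem_product]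
  constructor
  · intro hP
    rw [mem_goodFlags] at hP
    by_cases hex : ∃ e, (a, e) ∈ P
    · obtain ⟨e, he⟩ := hex
      refine Or.inr ⟨(e, P.erase (a, e)), ⟨?_, ?_⟩, ?_⟩
      · exact (hP.1 _ he).2
      · rw [mem_goodFlags]
        constructor
        · intro p hp
          have hp' := mem_of_mem_erase hp
          refine ⟨?_, (hP.1 p hp').2⟩
          have h1 := (hP.1 p hp').1
          rw [mem_insert] at h1
          rcases h1 with h | h
          · exfalso
            have : p = (a, e) := hP.2 p hp' (a, e) he (by rw [h])
            exact (notMem_erase _ _) (this ▸ hp)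
          · exact h
        · intro p hp q hq h
          exact hP.2 p (mem_of_mem_erase hp) q (mem_of_mem_erase hq) h
      · exact insert_erase he
    · left
      rw [mem_goodFlags]
      refine ⟨fun p hp => ⟨?_, (hP.1 p hp).2⟩, hP.2⟩
      have h1 := (hP.1 p hp).1
      rw [mem_insert] at h1
      rcases h1 with h | h
      · exact absurd ⟨p.2, by rwa [← h, Prod.mk.eta]⟩ hex
      · exact h
  · rintro (hP | ⟨⟨e, Q⟩, ⟨he, hQ⟩, rfl⟩)
    · rw [mem_goodFlags] at hP ⊢
      exact ⟨fun p hp => ⟨mem_insert_of_mem (hP.1 p hp).1, (hP.1 p hp).2⟩, hP.2⟩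
    · rw [mem_goodFlags] at hQ ⊢
      constructor
      · intro p hp
        rcases mem_insert.1 hp with rfl | hp'
        · exact ⟨mem_insert_self _ _, he⟩
        · exact ⟨mem_insert_of_mem (hQ.1 p hp').1, (hQ.1 p hp').2⟩
      · intro p hp q hq h
        rcases mem_insert.1 hp with rfl | hp' <;> rcases mem_insert.1 hq with rfl | hq'
        · rfl
        · exfalso
          have h2 := (hQ.1 q hq').1
          simp only [] at h
          rw [← h] at h2
          exact ha h2
        · exfalso
          have h2 := (hQ.1 p hp').1
          rw [h] at h2
          exact ha h2
        · exact hQ.2 p hp' q hq' h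

lemma flagsOf_insert (z : Sym2 V) (n : Finset (Sym2 V)) :
    flagsOf (insert z n) = (univ.filter (· ∈ z)).image (fun v => (v, z)) ∪ flagsOf n := by
  ext p
  simp only [flagsOf, mem_union, mem_image, mem_filter, mem_univ, true_and, mem_insert]
  constructor
  · rintro ⟨rfl | h2, h3⟩
    · exact Or.inl ⟨p.1, h3, rfl⟩
    · exact Or.inr ⟨h2, h3⟩
  · rintro (⟨v, hv, rfl⟩ | ⟨h2, h3⟩)
    · exact ⟨Or.inl rfl, hv⟩
    · exact ⟨Or.inr h2, h3⟩

lemma mem_flagsOf {n : Finset (Sym2 V)} {p : V × Sym2 V} :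
    p ∈ flagsOf n ↔ p.2 ∈ n ∧ p.1 ∈ p.2 := by
  simp [flagsOf]

lemma card_flagsOf {n : Finset (Sym2 V)} (hd : ∀ e ∈ n, ¬ e.IsDiag) :
    (flagsOf n).card = 2 * n.card := by
  induction n using Finset.induction_on with
  | empty => simp [flagsOf]
  | @insert z n hzn ih =>
    have hdisj : Disjoint ((univ.filter (· ∈ z)).image (fun v => (v, z))) (flagsOf n) := by
      rw [disjoint_left]
      rintro p hp hp'
      obtain ⟨v, -, rfl⟩ := mem_image.1 hp
      rw [mem_flagsOf] at hp'
      exact hzn hp'.1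
    rw [flagsOf_insert z n, card_union_of_disjoint hdisj,
      card_image_of_injective _ (fun v w h => by simpa using h),
      card_filter_mem_sym2 (hd z (mem_insert_self _ _)),
      ih (fun e he => hd e (mem_insert_of_mem he)), card_insert_of_notMem hzn]
    ring


lemma mem_incidenceFinset_of {e : Sym2 V} {v : V} (he : e ∈ G.edgeFinset) (hv : v ∈ e) :
    e ∈ G.incidenceFinset v := by
  rw [SimpleGraph.mem_incidenceFinset]
  exact ⟨SimpleGraph.mem_edgeFinset.1 he, hv⟩

lemma edgeFinset_of_mem_incidenceFinset {e : Sym2 V} {v : V} (he : e ∈ G.incidenceFinset v) :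
    e ∈ G.edgeFinset ∧ v ∈ e := by
  rw [SimpleGraph.mem_incidenceFinset] at he
  exact ⟨SimpleGraph.mem_edgeFinset.2 he.1, he.2⟩

end Flags


section Dev3
open Polynomial
variable [Fintype V] [DecidableEq V] {G : SimpleGraph V} [DecidableRel G.Adj] {W : Finset V}

lemma prod_expansion (s : Finset V) :
    ∏ v ∈ s, ((X : Polynomial ℝ) ^ 2 - C (G.degree v : ℝ)) =
      ∑ Q ∈ goodFlags G s, (-1 : Polynomial ℝ) ^ Q.card * X ^ (2 * (s.card - Q.card)) := by
  induction s using Finset.induction_on with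
  | empty => simp [goodFlags_empty]
  | @insert a s ha ih =>
    have hdisj : Disjoint (goodFlags G s)
        ((G.incidenceFinset a ×ˢ goodFlags G s).image (fun q => insert (a, q.1) q.2)) := by
      rw [disjoint_right]
      intro Q hQ hQ'
      obtain ⟨⟨e, Q'⟩, hmem, rfl⟩ := mem_image.1 hQ
      rw [mem_goodFlags] at hQ'
      exact ha ((hQ'.1 (a, e) (mem_insert_self _ _)).1)
    have hinj : ∀ x ∈ G.incidenceFinset a ×ˢ goodFlags G s,
        ∀ y ∈ G.incidenceFinset a ×ˢ goodFlags G s,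
        insert (a, x.1) x.2 = insert (a, y.1) y.2 → x = y := by
      rintro ⟨e, Q⟩ hx ⟨f, R⟩ hy h
      rw [mem_product, mem_goodFlags] at hx hy
      have hnx : (a, e) ∉ Q := fun hmem => ha ((hx.2.1 _ hmem).1)
      have hny : (a, f) ∉ R := fun hmem => ha ((hy.2.1 _ hmem).1)
      have hef : e = f := by
        have : (a, e) ∈ insert (a, f) R := h ▸ mem_insert_self (a, e) Q
        rcases mem_insert.1 this with h' | h'
        · exact (Prod.mk.injEq .. ▸ h').2
        · exact absurd ((hy.2.1 _ h').1) ha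
      subst hef
      have : Q = R := by
        have h1 : Q = (insert (a, e) Q).erase (a, e) := by rw [erase_insert hnx]
        have h2 : R = (insert (a, e) R).erase (a, e) := by rw [erase_insert hny]
        rw [h1, h2, h]
      rw [this]
    have hcard : ∀ Q ∈ goodFlags G s, Q.card ≤ s.card := fun Q hQ => card_le_of_goodFlags hQ
    rw [prod_insert ha, ih, goodFlags_insert ha, sum_union hdisj, sum_image hinj, sum_product]
    have hdeg : (C (G.degree a : ℝ) : Polynomial ℝ) = ((G.incidenceFinset a).card : Polynomial ℝ) := by
      rw [SimpleGraph.card_incidenceFinset_eq_degree]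
      simp
    rw [sub_mul, mul_sum]
    have e1 : ∀ Q ∈ goodFlags G s,
        (X : Polynomial ℝ) ^ 2 * ((-1) ^ Q.card * X ^ (2 * (s.card - Q.card))) =
          (-1) ^ Q.card * X ^ (2 * ((insert a s).card - Q.card)) := by
      intro Q hQ
      rw [card_insert_of_notMem ha,
        show 2 * (s.card + 1 - Q.card) = 2 * (s.card - Q.card) + 2 by
          have := hcard Q hQ; omega, pow_add]
      ring
    have e2 : ∀ e ∈ G.incidenceFinset a, ∀ Q ∈ goodFlags G s,
        (-1 : Polynomial ℝ) ^ (insert (a, e) Q).card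
            * X ^ (2 * ((insert a s).card - (insert (a, e) Q).card)) =
          -((-1) ^ Q.card * X ^ (2 * (s.card - Q.card))) := by
      intro e he Q hQ
      have hnx : (a, e) ∉ Q := fun hmem => by
        rw [mem_goodFlags] at hQ
        exact ha ((hQ.1 _ hmem).1)
      rw [card_insert_of_notMem hnx, card_insert_of_notMem ha,
        show 2 * (s.card + 1 - (Q.card + 1)) = 2 * (s.card - Q.card) by omega]
      ring
    rw [sum_congr rfl e1, sum_congr rfl (fun e he => sum_congr rfl (fun Q hQ => e2 e he Q hQ))]
    rw [sum_const, hdeg]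
    rw [sum_neg_distrib]
    ring

end Dev3


section Dev4
open Polynomial
variable [Fintype V] [DecidableEq V] {G : SimpleGraph V} [DecidableRel G.Adj] {W : Finset V}

/-- Matchings of `G` avoiding the vertex set `W`, as finsets of edges of `G`. -/
def matchingsAvoid (G₀ : SimpleGraph V) [DecidableRel G₀.Adj] (W₀ : Finset V) :
    Finset (Finset (Sym2 V)) :=
  (matchings G₀).filter (fun n => ∀ e ∈ n, ∀ v ∈ e, v ∉ W₀)

lemma mem_matchingsAvoid {n : Finset (Sym2 V)} :
    n ∈ matchingsAvoid G W ↔ (n ⊆ G.edgeFinset ∧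
      ∀ e ∈ n, ∀ f ∈ n, e ≠ f → ∀ w : V, w ∈ e → w ∉ f) ∧ ∀ e ∈ n, ∀ v ∈ e, v ∉ W := by
  rw [matchingsAvoid, mem_filter, mem_matchings]

lemma aeval_mvMatch :
    MvPolynomial.aeval
        (fun v : {v : V | v ∉ W} =>
          ((X : Polynomial ℝ) ^ 2 - C (G.degree v.val : ℝ)))
        (mvMatch (G.induce {v : V | v ∉ W})) =
      ∑ n ∈ matchingsAvoid G W, (-1 : Polynomial ℝ) ^ n.card *
        ∏ v ∈ outW W \ covered n, ((X : Polynomial ℝ) ^ 2 - C (G.degree v : ℝ)) := by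
  have hval : Function.Injective (Subtype.val : {v : V | v ∉ W} → V) := Subtype.val_injective
  have hmap : Function.Injective (Sym2.map (Subtype.val : {v : V | v ∉ W} → V)) :=
    Sym2.map.injective hval
  rw [mvMatch, map_sum]
  refine Finset.sum_bij' (fun N _ => N.image (Sym2.map Subtype.val))
    (fun n _ => (univ : Finset (Sym2 {v : V | v ∉ W})).filter
      (fun z => Sym2.map Subtype.val z ∈ n)) ?_ ?_ ?_ ?_ ?_
  · -- maps into matchingsAvoid
    intro N hN
    rw [mem_matchings] at hN
    rw [mem_matchingsAvoid]
    refine ⟨⟨?_, ?_⟩, ?_⟩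
    · intro z hz
      obtain ⟨z', hz', rfl⟩ := mem_image.1 hz
      have := hN.1 hz'
      revert this
      induction z' using Sym2.inductionOn with
      | hf u w =>
        intro h
        rw [SimpleGraph.mem_edgeFinset, SimpleGraph.mem_edgeSet] at h
        rw [Sym2.map_pair_eq, SimpleGraph.mem_edgeFinset, SimpleGraph.mem_edgeSet]
        exact h
    · rintro e he f hf hef w hwe hwf
      obtain ⟨e', he', rfl⟩ := mem_image.1 he
      obtain ⟨f', hf', rfl⟩ := mem_image.1 hf
      obtain ⟨w1, hw1, hw1v⟩ := Sym2.mem_map.1 hwe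
      obtain ⟨w2, hw2, hw2v⟩ := Sym2.mem_map.1 hwf
      have hw12 : w1 = w2 := hval (by rw [hw1v, hw2v])
      exact hN.2 e' he' f' hf' (fun h => hef (by rw [h])) w1 hw1 (hw12 ▸ hw2)
    · intro e he v hv
      obtain ⟨e', he', rfl⟩ := mem_image.1 he
      obtain ⟨w1, hw1, hw1v⟩ := Sym2.mem_map.1 hv
      have := w1.prop
      rw [Set.mem_setOf_eq] at this
      rwa [← hw1v]
  · -- maps into matchings of induced graph
    intro n hn
    rw [mem_matchingsAvoid] at hn
    rw [mem_matchings]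
    constructor
    · intro z hz
      rw [mem_filter] at hz
      have := hn.1.1 hz.2
      revert this
      induction z using Sym2.inductionOn with
      | hf u w =>
        intro h
        rw [Sym2.map_pair_eq, SimpleGraph.mem_edgeFinset, SimpleGraph.mem_edgeSet] at h
        rw [SimpleGraph.mem_edgeFinset, SimpleGraph.mem_edgeSet]
        exact h
    · intro e he f hf hef w hwe hwf
      rw [mem_filter] at he hf
      exact hn.1.2 _ he.2 _ hf.2 (fun h => hef (hmap h)) w.val
        (Sym2.mem_map.2 ⟨w, hwe, rfl⟩) (Sym2.mem_map.2 ⟨w, hwf, rfl⟩)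
  · -- left inverse
    intro N hN
    ext z
    rw [mem_filter]
    simp only [mem_univ, true_and]
    constructor
    · intro h
      obtain ⟨z', hz', hzz⟩ := mem_image.1 h
      rwa [← hmap hzz]
    · intro h
      exact mem_image_of_mem _ h
  · -- right inverse
    intro n hn
    rw [mem_matchingsAvoid] at hn
    ext z
    constructor
    · intro hz
      obtain ⟨z', hz', rfl⟩ := mem_image.1 hz
      exact (mem_filter.1 hz').2
    · intro hz
      have hrep : ∃ z' : Sym2 {v : V | v ∉ W}, Sym2.map Subtype.val z' = z := by
        revert hz
        induction z using Sym2.inductionOn with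
        | hf u w =>
          intro hz
          have hu : u ∈ ({v : V | v ∉ W} : Set V) :=
            hn.2 _ hz u (Sym2.mem_mk_left u w)
          have hw : w ∈ ({v : V | v ∉ W} : Set V) :=
            hn.2 _ hz w (Sym2.mem_mk_right u w)
          exact ⟨s(⟨u, hu⟩, ⟨w, hw⟩), by rw [Sym2.map_pair_eq]⟩
      obtain ⟨z', rfl⟩ := hrep
      exact mem_image_of_mem _ (mem_filter.2 ⟨mem_univ _, hz⟩)
  · -- terms agree
    intro N hN
    rw [map_mul, map_pow, map_neg, map_one, map_prod]
    simp only [MvPolynomial.aeval_X]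
    have hcard : (N.image (Sym2.map Subtype.val)).card = N.card :=
      card_image_of_injective _ hmap
    rw [hcard]
    congr 1
    have himg : (univ \ covered N).image (Subtype.val : {v : V | v ∉ W} → V) =
        outW W \ covered (N.image (Sym2.map Subtype.val)) := by
      ext v
      constructor
      · intro hv
        obtain ⟨v', hv', rfl⟩ := mem_image.1 hv
        rw [mem_sdiff] at hv' ⊢
        refine ⟨by rw [outW, mem_filter]; exact ⟨mem_univ _, v'.prop⟩, ?_⟩
        intro hc
        obtain ⟨e, he, hve⟩ := mem_covered.1 hc
        obtain ⟨e', he', rfl⟩ := mem_image.1 he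
        obtain ⟨w1, hw1, hw1v⟩ := Sym2.mem_map.1 hve
        have hw : w1 = v' := hval hw1v
        exact hv'.2 (mem_covered.2 ⟨e', he', hw ▸ hw1⟩)
      · intro hv
        rw [mem_sdiff, outW, mem_filter] at hv
        refine mem_image.2 ⟨⟨v, hv.1.2⟩, ?_, rfl⟩
        rw [mem_sdiff]
        refine ⟨mem_univ _, ?_⟩
        intro hc
        obtain ⟨e, he, hve⟩ := mem_covered.1 hc
        exact hv.2 (mem_covered.2 ⟨Sym2.map Subtype.val e, mem_image_of_mem _ he,
          Sym2.mem_map.2 ⟨⟨v, hv.1.2⟩, hve, rfl⟩⟩)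
    rw [← himg, prod_image (fun x _ y _ h => hval h)]

end Dev4


section Dev5
set_option linter.unusedSectionVars false
open Polynomial
variable [Fintype V] [DecidableEq V] {G : SimpleGraph V} [DecidableRel G.Adj]
  {W : Finset V}

/-- facts about matchings avoiding W -/
lemma matchingsAvoid_facts {n : Finset (Sym2 V)} (hn : n ∈ matchingsAvoid G W) :
    covered n ⊆ outW W ∧ (covered n).card = 2 * n.card := by
  rw [mem_matchingsAvoid] at hn
  constructor
  · intro v hv
    obtain ⟨e, he, hve⟩ := mem_covered.1 hv
    rw [outW, mem_filter]
    exact ⟨mem_univ _, hn.2 e he v hve⟩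
  · exact card_covered
      (fun e he => SimpleGraph.not_isDiag_of_mem_edgeSet G
        (SimpleGraph.mem_edgeFinset.1 (hn.1.1 he))) hn.1.2

lemma flags_union_good {n : Finset (Sym2 V)} {Q : Finset (V × Sym2 V)}
    (hn : n ∈ matchingsAvoid G W) (hQ : Q ∈ goodFlags G (outW W \ covered n)) :
    flagsOf n ∪ Q ∈ goodFlags G (outW W) := by
  have hn' := hn
  rw [mem_matchingsAvoid] at hn'
  rw [mem_goodFlags] at hQ ⊢
  constructor
  · intro p hp
    rcases mem_union.1 hp with hp | hp
    · rw [mem_flagsOf] at hp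
      refine ⟨?_, mem_incidenceFinset_of (hn'.1.1 hp.1) hp.2⟩
      rw [outW, mem_filter]
      exact ⟨mem_univ _, hn'.2 p.2 hp.1 p.1 hp.2⟩
    · exact ⟨(mem_sdiff.1 (hQ.1 p hp).1).1, (hQ.1 p hp).2⟩
  · intro p hp q hq h
    have hcovmem : ∀ r : V × Sym2 V, r ∈ flagsOf n → r.1 ∈ covered n := by
      intro r hr
      rw [mem_flagsOf] at hr
      exact mem_covered.2 ⟨r.2, hr.1, hr.2⟩
    have hcovnot : ∀ r : V × Sym2 V, r ∈ Q → r.1 ∉ covered n := by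
      intro r hr
      exact (mem_sdiff.1 (hQ.1 r hr).1).2
    rcases mem_union.1 hp with hp' | hp' <;> rcases mem_union.1 hq with hq' | hq'
    · rw [mem_flagsOf] at hp' hq'
      have hee : p.2 = q.2 := by
        by_contra hne
        exact hn'.1.2 p.2 hp'.1 q.2 hq'.1 hne p.1 hp'.2 (h ▸ hq'.2)
      exact Prod.ext h hee
    · exact absurd (hcovmem p hp') (h ▸ hcovnot q hq')
    · exact absurd (h ▸ hcovmem q hq') (hcovnot p hp')
    · exact hQ.2 p hp' q hq' h

lemma flagsOf_subset_of_doubled {m : Finset (Sym2 V)} {P : Finset (V × Sym2 V)}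
    (hm : m ⊆ doubled G P) : flagsOf m ⊆ P := by
  intro p hp
  rw [mem_flagsOf] at hp
  have := hm hp.1
  rw [doubled, mem_filter] at this
  have h2 := this.2 p.1 hp.2
  rwa [Prod.mk.eta] at h2

lemma sigma_mk_eq {α β : Type*} {a a' : α} {b b' : β} (h1 : a = a') (h2 : b = b') :
    (⟨a, b⟩ : Σ _ : α, β) = ⟨a', b'⟩ := by subst h1; subst h2; rfl

lemma rhs_combination :
    (X : Polynomial ℝ) ^ (G.edgeFinset.card + W.card) *
      (∑ n ∈ matchingsAvoid G W, (-1 : Polynomial ℝ) ^ n.card *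
        ∏ v ∈ outW W \ covered n, ((X : Polynomial ℝ) ^ 2 - C (G.degree v : ℝ))) =
    ∑ P ∈ (goodFlags G (outW W)).filter (fun P => doubled G P = ∅),
      (-1 : Polynomial ℝ) ^ P.card *
        X ^ (2 * (outW W).card + G.edgeFinset.card + W.card - 2 * P.card) := by
  set E := G.edgeFinset.card with hE
  set U := (outW W).card with hU
  set K := 2 * U + E + W.card with hK
  -- Step 1: expand products into flag sums
  have step1 : ∀ n ∈ matchingsAvoid G W,
      (X : Polynomial ℝ) ^ (E + W.card) * ((-1 : Polynomial ℝ) ^ n.card *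
        ∏ v ∈ outW W \ covered n, ((X : Polynomial ℝ) ^ 2 - C (G.degree v : ℝ))) =
      ∑ Q ∈ goodFlags G (outW W \ covered n),
        (-1 : Polynomial ℝ) ^ (n.card + Q.card) * X ^ (K - 2 * (2 * n.card + Q.card)) := by
    intro n hn
    obtain ⟨hsub, hcov⟩ := matchingsAvoid_facts hn
    have hcle : (covered n).card ≤ U := card_le_card hsub
    have hc : (outW W \ covered n).card = U - 2 * n.card := by
      rw [card_sdiff_of_subset hsub, hcov]
    rw [prod_expansion, mul_sum, mul_sum]
    refine sum_congr rfl ?_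
    intro Q hQ
    have hQle : Q.card ≤ U - 2 * n.card := hc ▸ card_le_of_goodFlags hQ
    have hexp : E + W.card + 2 * ((outW W \ covered n).card - Q.card) =
        K - 2 * (2 * n.card + Q.card) := by
      rw [hc]; omega
    rw [← hexp, pow_add, pow_add]
    ring
  rw [mul_sum, sum_congr rfl step1, Finset.sum_sigma']
  -- Step 2: bijection with (P, m) pairs
  have step2 : ∑ x ∈ (matchingsAvoid G W).sigma
        (fun n => goodFlags G (outW W \ covered n)),
      (-1 : Polynomial ℝ) ^ (x.1.card + x.2.card) * X ^ (K - 2 * (2 * x.1.card + x.2.card)) =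
      ∑ y ∈ (goodFlags G (outW W)).sigma (fun P => (doubled G P).powerset),
      (-1 : Polynomial ℝ) ^ (y.1.card + y.2.card) * X ^ (K - 2 * y.1.card) := by
    refine Finset.sum_bij' (fun x _ => (⟨flagsOf x.1 ∪ x.2, x.1⟩ :
        Σ _ : Finset (V × Sym2 V), Finset (Sym2 V)))
      (fun y _ => (⟨y.2, y.1 \ flagsOf y.2⟩ : Σ _ : Finset (Sym2 V), Finset (V × Sym2 V)))
      ?_ ?_ ?_ ?_ ?_
    · -- forward map lands in target
      rintro ⟨n, Q⟩ hx
      rw [mem_sigma] at hx ⊢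
      obtain ⟨hn, hQ⟩ := hx
      refine ⟨flags_union_good hn hQ, ?_⟩
      rw [mem_powerset]
      intro e he
      rw [mem_matchingsAvoid] at hn
      rw [doubled, mem_filter]
      refine ⟨hn.1.1 he, ?_⟩
      intro v hv
      exact mem_union_left _ (mem_flagsOf.2 ⟨he, hv⟩)
    · -- backward map lands in source
      rintro ⟨P, m⟩ hy
      rw [mem_sigma] at hy ⊢
      obtain ⟨hP, hm⟩ := hy
      rw [mem_powerset] at hm
      rw [mem_goodFlags] at hP
      have hmA : m ∈ matchingsAvoid G W := by
        rw [mem_matchingsAvoid]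
        have hes : ∀ e ∈ m, e ∈ G.edgeFinset ∧ ∀ v ∈ e, (v, e) ∈ P := by
          intro e he
          have := hm he
          rw [doubled, mem_filter] at this
          exact this
        refine ⟨⟨fun e he => (hes e he).1, ?_⟩, ?_⟩
        · intro e he f hf hef w hwe hwf
          have h1 := (hes e he).2 w hwe
          have h2 := (hes f hf).2 w hwf
          have := hP.2 _ h1 _ h2 rfl
          exact hef (by injection this)
        · intro e he v hv
          have h1 := (hes e he).2 v hv
          have := (hP.1 _ h1).1
          rw [outW, mem_filter] at this
          exact this.2
      refine ⟨hmA, ?_⟩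
      rw [mem_goodFlags]
      constructor
      · intro p hp
        rw [mem_sdiff] at hp
        refine ⟨?_, (hP.1 p hp.1).2⟩
        rw [mem_sdiff]
        refine ⟨(hP.1 p hp.1).1, ?_⟩
        intro hc
        obtain ⟨e, he, hve⟩ := mem_covered.1 hc
        have h1 : (p.1, e) ∈ P := by
          have := hm he
          rw [doubled, mem_filter] at this
          exact this.2 p.1 hve
        have : p = (p.1, e) := hP.2 p hp.1 _ h1 rfl
        exact hp.2 (this ▸ mem_flagsOf.2 ⟨by rw [this] at hve ⊢; exact he, by
          rw [this] at hve ⊢; exact hve⟩)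
      · intro p hp q hq h
        exact hP.2 p (mem_sdiff.1 hp).1 q (mem_sdiff.1 hq).1 h
    · -- left inverse
      rintro ⟨n, Q⟩ hx
      rw [mem_sigma] at hx
      obtain ⟨hn, hQ⟩ := hx
      have hdisj : ∀ p ∈ Q, p ∉ flagsOf n := by
        intro p hp hpf
        rw [mem_goodFlags] at hQ
        have h1 := (mem_sdiff.1 (hQ.1 p hp).1).2
        rw [mem_flagsOf] at hpf
        exact h1 (mem_covered.2 ⟨p.2, hpf.1, hpf.2⟩)
      have : (flagsOf n ∪ Q) \ flagsOf n = Q := by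
        ext p
        rw [mem_sdiff, mem_union]
        constructor
        · rintro ⟨h1 | h1, h2⟩
          · exact absurd h1 h2
          · exact h1
        · intro h1
          exact ⟨Or.inr h1, hdisj p h1⟩
      exact sigma_mk_eq rfl this
    · -- right inverse
      rintro ⟨P, m⟩ hy
      rw [mem_sigma, mem_powerset] at hy
      have : flagsOf m ∪ (P \ flagsOf m) = P :=
        union_sdiff_of_subset (flagsOf_subset_of_doubled hy.2)
      exact sigma_mk_eq this rfl
    · -- terms agree
      rintro ⟨n, Q⟩ hx
      rw [mem_sigma] at hx
      obtain ⟨hn, hQ⟩ := hx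
      have hn' := hn
      rw [mem_matchingsAvoid] at hn'
      have hfc : (flagsOf n).card = 2 * n.card :=
        card_flagsOf (fun e he => SimpleGraph.not_isDiag_of_mem_edgeSet G
          (SimpleGraph.mem_edgeFinset.1 (hn'.1.1 he)))
      have hdisj : Disjoint (flagsOf n) Q := by
        rw [disjoint_right]
        intro p hp hpf
        rw [mem_goodFlags] at hQ
        have h1 := (mem_sdiff.1 (hQ.1 p hp).1).2
        rw [mem_flagsOf] at hpf
        exact h1 (mem_covered.2 ⟨p.2, hpf.1, hpf.2⟩)
      have hcard : (flagsOf n ∪ Q).card = 2 * n.card + Q.card := by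
        rw [card_union_of_disjoint hdisj, hfc]
      show (-1 : Polynomial ℝ) ^ (n.card + Q.card) * X ^ (K - 2 * (2 * n.card + Q.card)) =
          (-1 : Polynomial ℝ) ^ ((flagsOf n ∪ Q).card + n.card) *
            X ^ (K - 2 * (flagsOf n ∪ Q).card)
      rw [hcard, show 2 * n.card + Q.card + n.card = (n.card + Q.card) + 2 * n.card by ring,
        pow_add (-1 : Polynomial ℝ) (n.card + Q.card), pow_mul, neg_one_sq, one_pow, mul_one]
  rw [step2]
  -- Step 3: collapse the inner powerset sums
  rw [Finset.sum_sigma]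
  have step3 : ∀ P ∈ goodFlags G (outW W),
      (∑ m ∈ (doubled G P).powerset,
        (-1 : Polynomial ℝ) ^ (P.card + m.card) * X ^ (K - 2 * P.card)) =
      (if doubled G P = ∅ then (1:Polynomial ℝ) else 0) *
        ((-1 : Polynomial ℝ) ^ P.card * X ^ (K - 2 * P.card)) := by
    intro P hP
    have : ∀ m ∈ (doubled G P).powerset,
        (-1 : Polynomial ℝ) ^ (P.card + m.card) * X ^ (K - 2 * P.card) =
        (-1 : Polynomial ℝ) ^ m.card * ((-1 : Polynomial ℝ) ^ P.card * X ^ (K - 2 * P.card)) := by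
      intro m hm
      rw [pow_add]; ring
    rw [sum_congr rfl this, ← sum_mul, sum_neg_one_pow]
  rw [sum_congr rfl step3]
  rw [sum_filter]
  refine sum_congr rfl ?_
  intro P hP
  by_cases h : doubled G P = ∅ <;> simp [h, hK, hU, hE]

end Dev5


section Dev6
set_option linter.unusedSectionVars false
open Polynomial
variable [Fintype V] [DecidableEq V]

section LHS

variable (G : SimpleGraph V) [DecidableRel G.Adj] (W : Finset V)

/-- The vertex set of `S(G) - W`. -/
abbrev SD : Set (V ⊕ G.edgeSet) := {x : V ⊕ G.edgeSet | ∀ w ∈ W, x ≠ Sum.inl w}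

/-- Projection of subdivision vertices to `V ⊕ Sym2 V`. -/
def piMap (x : ↥(SD G W)) : V ⊕ Sym2 V := Sum.map id Subtype.val x.val

/-- The `Sym2` element corresponding to a flag. -/
def iota (p : V × Sym2 V) : Sym2 (V ⊕ Sym2 V) := s(Sum.inl p.1, Sum.inr p.2)

variable {G W}

lemma piMap_injective : Function.Injective (piMap G W) := by
  rintro ⟨xv, hx⟩ ⟨yv, hy⟩ h
  apply Subtype.ext
  cases xv <;> cases yv <;> simp [piMap] at h ⊢ <;>
    first | exact h | exact Subtype.ext h

lemma piMap_eq_inl {x : ↥(SD G W)} {a : V} :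
    piMap G W x = Sum.inl a ↔ x.val = Sum.inl a := by
  rcases x with ⟨xv, hx⟩
  cases xv <;> simp [piMap]

lemma piMap_eq_inr {x : ↥(SD G W)} {eV : Sym2 V} :
    piMap G W x = Sum.inr eV ↔ ∃ e' : G.edgeSet, x.val = Sum.inr e' ∧ (e' : Sym2 V) = eV := by
  rcases x with ⟨xv, hx⟩
  cases xv <;> simp [piMap]

lemma iota_injective : Function.Injective (iota (V := V)) := by
  rintro ⟨a, e⟩ ⟨b, f⟩ h
  rw [iota, iota, Sym2.eq_iff] at h
  rcases h with ⟨h1, h2⟩ | ⟨h1, h2⟩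
  · simp only [Sum.inl.injEq, Sum.inr.injEq] at h1 h2
    rw [h1, h2]
  · exact absurd h1 (by simp)

lemma edge_exists {z : Sym2 ↥(SD G W)}
    (hz : z ∈ ((subdivision G).induce (SD G W)).edgeFinset) :
    ∃ p : V × Sym2 V, p.2 ∈ G.edgeFinset ∧ p.1 ∈ p.2 ∧ p.1 ∉ W ∧
      Sym2.map (piMap G W) z = iota p := by
  rw [SimpleGraph.mem_edgeFinset] at hz
  revert hz
  induction z using Sym2.inductionOn with
  | hf x y =>
    intro hz
    rw [SimpleGraph.mem_edgeSet] at hz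
    have hadj : (subdivision G).Adj x.val y.val := hz
    rw [subdivision, SimpleGraph.fromRel_adj] at hadj
    rcases hadj.2 with ⟨a, e, hx, hy, hae⟩ | ⟨a, e, hy, hx, hae⟩
    · refine ⟨(a, (e : Sym2 V)), ?_, hae, ?_, ?_⟩
      · rw [SimpleGraph.mem_edgeFinset]; exact e.prop
      · intro haW
        exact (x.prop a haW) hx
      · have hpx : piMap G W x = Sum.inl a := by simp [piMap, hx]
        have hpy : piMap G W y = Sum.inr (e : Sym2 V) := by simp [piMap, hy]
        rw [Sym2.map_pair_eq, hpx, hpy, iota]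
    · refine ⟨(a, (e : Sym2 V)), ?_, hae, ?_, ?_⟩
      · rw [SimpleGraph.mem_edgeFinset]; exact e.prop
      · intro haW
        exact (y.prop a haW) hy
      · have hpx : piMap G W x = Sum.inr (e : Sym2 V) := by simp [piMap, hx]
        have hpy : piMap G W y = Sum.inl a := by simp [piMap, hy]
        rw [Sym2.map_pair_eq, hpx, hpy, iota, Sym2.eq_swap]

lemma edge_mk {p : V × Sym2 V} (he : p.2 ∈ G.edgeSet) (hp : p.1 ∈ p.2)
    {x y : ↥(SD G W)} (hx : x.val = Sum.inl p.1) (hy : y.val = Sum.inr ⟨p.2, he⟩) :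
    ((subdivision G).induce (SD G W)).Adj x y := by
  show (subdivision G).Adj x.val y.val
  rw [subdivision, SimpleGraph.fromRel_adj]
  constructor
  · rw [hx, hy]; simp
  · exact Or.inl ⟨p.1, ⟨p.2, he⟩, hx, hy, hp⟩

variable (G W)

/-- Flag set associated to a matching of the subdivision. -/
def PhiM (M : Finset (Sym2 ↥(SD G W))) : Finset (V × Sym2 V) :=
  univ.filter (fun p => iota p ∈ M.image (Sym2.map (piMap G W)))

/-- Matching of the subdivision associated to a flag set. -/
def PsiM (P : Finset (V × Sym2 V)) : Finset (Sym2 ↥(SD G W)) :=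
  univ.filter (fun z => ∃ p ∈ P, Sym2.map (piMap G W) z = iota p)

variable {G W}

lemma mem_PhiM {M : Finset (Sym2 ↥(SD G W))} {p : V × Sym2 V} :
    p ∈ PhiM G W M ↔ iota p ∈ M.image (Sym2.map (piMap G W)) := by
  simp [PhiM]

lemma mem_PsiM {P : Finset (V × Sym2 V)} {z : Sym2 ↥(SD G W)} :
    z ∈ PsiM G W P ↔ ∃ p ∈ P, Sym2.map (piMap G W) z = iota p := by
  simp [PsiM]

lemma inl_mem_iota (p : V × Sym2 V) : (Sum.inl p.1 : V ⊕ Sym2 V) ∈ iota p :=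
  Sym2.mem_mk_left _ _

lemma inr_mem_iota (p : V × Sym2 V) : (Sum.inr p.2 : V ⊕ Sym2 V) ∈ iota p :=
  Sym2.mem_mk_right _ _

/-- two matching edges whose images share a member are equal -/
lemma eq_of_shared {M : Finset (Sym2 ↥(SD G W))}
    (hM : M ∈ matchings ((subdivision G).induce (SD G W)))
    {z z' : Sym2 ↥(SD G W)} (hz : z ∈ M) (hz' : z' ∈ M)
    {u : V ⊕ Sym2 V} (hu : u ∈ Sym2.map (piMap G W) z) (hu' : u ∈ Sym2.map (piMap G W) z') :
    z = z' := by
  by_contra hne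
  obtain ⟨w1, hw1, hw1u⟩ := Sym2.mem_map.1 hu
  obtain ⟨w2, hw2, hw2u⟩ := Sym2.mem_map.1 hu'
  have : w1 = w2 := piMap_injective (by rw [hw1u, hw2u])
  exact (mem_matchings.1 hM).2 z hz z' hz' hne w1 hw1 (this ▸ hw2)

lemma PhiM_mem_goodFlags {M : Finset (Sym2 ↥(SD G W))}
    (hM : M ∈ matchings ((subdivision G).induce (SD G W))) :
    PhiM G W M ∈ (goodFlags G (outW W)).filter (fun P => doubled G P = ∅) := by
  have hMe := (mem_matchings.1 hM).1
  rw [mem_filter, mem_goodFlags]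
  refine ⟨⟨?_, ?_⟩, ?_⟩
  · -- flags are good
    intro p hp
    rw [mem_PhiM] at hp
    obtain ⟨z, hz, hzp⟩ := mem_image.1 hp
    obtain ⟨q, hq1, hq2, hq3, hq4⟩ := edge_exists (hMe hz)
    have : q = p := iota_injective (by rw [← hq4, hzp])
    subst this
    refine ⟨?_, mem_incidenceFinset_of hq1 hq2⟩
    rw [outW, mem_filter]
    exact ⟨mem_univ _, hq3⟩
  · -- vertex functional
    intro p hp q hq h
    rw [mem_PhiM] at hp hq
    obtain ⟨z, hz, hzp⟩ := mem_image.1 hp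
    obtain ⟨z', hz', hzq⟩ := mem_image.1 hq
    have : z = z' := by
      refine eq_of_shared hM hz hz' (u := Sum.inl p.1) ?_ ?_
      · rw [hzp]; exact inl_mem_iota p
      · rw [hzq, h]; exact inl_mem_iota q
    subst this
    exact iota_injective (by rw [← hzp, ← hzq])
  · -- no doubled edges
    rw [eq_empty_iff_forall_notMem]
    intro e he
    rw [doubled, mem_filter] at he
    have hnd : ¬ e.IsDiag :=
      SimpleGraph.not_isDiag_of_mem_edgeSet G (SimpleGraph.mem_edgeFinset.1 he.1)
    obtain ⟨hef, hall⟩ := he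
    revert hnd hall
    induction e using Sym2.inductionOn with
    | hf a b =>
      intro hnd hall
      rw [Sym2.mk_isDiag_iff] at hnd
      have ha := hall a (Sym2.mem_mk_left a b)
      have hb := hall b (Sym2.mem_mk_right a b)
      rw [mem_PhiM] at ha hb
      obtain ⟨z, hz, hzp⟩ := mem_image.1 ha
      obtain ⟨z', hz', hzq⟩ := mem_image.1 hb
      have hzz : z = z' := by
        refine eq_of_shared hM hz hz' (u := Sum.inr s(a, b)) ?_ ?_
        · rw [hzp]; exact inr_mem_iota (a, s(a, b))
        · rw [hzq]; exact inr_mem_iota (b, s(a, b))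
      subst hzz
      have : (a, s(a, b)) = (b, s(a, b)) := iota_injective (by rw [← hzp, ← hzq])
      exact hnd (by injection this)

lemma edgeFun_of_P0 {P : Finset (V × Sym2 V)}
    (hP : P ∈ (goodFlags G (outW W)).filter (fun P => doubled G P = ∅)) :
    ∀ p ∈ P, ∀ q ∈ P, p.2 = q.2 → p = q := by
  rw [mem_filter, mem_goodFlags] at hP
  intro p hp q hq h
  by_contra hne
  have h1 : p.1 ≠ q.1 := fun h' => hne (hP.1.2 p hp q hq h')
  have hpe := (edgeFinset_of_mem_incidenceFinset (hP.1.1 p hp).2)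
  have hqe := (edgeFinset_of_mem_incidenceFinset (hP.1.1 q hq).2)
  have hmem : p.2 ∈ doubled G P := by
    rw [doubled, mem_filter]
    refine ⟨hpe.1, ?_⟩
    intro v hv
    have hv2 : v = p.1 ∨ v = q.1 := by
      have hq2 : q.1 ∈ p.2 := h ▸ hqe.2
      have hp2 := hpe.2
      revert hv hq2 hp2
      induction p.2 using Sym2.inductionOn with
      | hf c d =>
        intro hp2 hq2 hv
        rw [Sym2.mem_iff] at hp2 hq2 hv
        rcases hp2 with rfl | rfl <;> rcases hq2 with h' | h' <;>
          rcases hv with rfl | rfl <;> tauto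
    rcases hv2 with rfl | rfl
    · rwa [Prod.mk.eta]
    · rw [h, Prod.mk.eta]; exact hq
  rw [hP.2] at hmem
  exact notMem_empty _ hmem

lemma PsiM_mem_matchings {P : Finset (V × Sym2 V)}
    (hP : P ∈ (goodFlags G (outW W)).filter (fun P => doubled G P = ∅)) :
    PsiM G W P ∈ matchings ((subdivision G).induce (SD G W)) := by
  have hPg := (mem_filter.1 hP).1
  rw [mem_goodFlags] at hPg
  rw [mem_matchings]
  constructor
  · intro z hz
    rw [mem_PsiM] at hz
    obtain ⟨p, hp, hzp⟩ := hz
    have hpe := edgeFinset_of_mem_incidenceFinset (hPg.1 p hp).2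
    revert hzp
    induction z using Sym2.inductionOn with
    | hf x y =>
      intro hzp
      rw [Sym2.map_pair_eq, iota, Sym2.eq_iff] at hzp
      rw [SimpleGraph.mem_edgeFinset, SimpleGraph.mem_edgeSet]
      rcases hzp with ⟨h1, h2⟩ | ⟨h1, h2⟩
      · obtain ⟨e', he'1, he'2⟩ := piMap_eq_inr.1 h2
        exact edge_mk (W := W) (p := p) (SimpleGraph.mem_edgeFinset.1 hpe.1) hpe.2
          (piMap_eq_inl.1 h1) (by rw [he'1]; congr 1; exact Subtype.ext he'2)
      · obtain ⟨e', he'1, he'2⟩ := piMap_eq_inr.1 h1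
        exact ((edge_mk (W := W) (p := p) (SimpleGraph.mem_edgeFinset.1 hpe.1) hpe.2
          (piMap_eq_inl.1 h2) (by rw [he'1]; congr 1; exact Subtype.ext he'2)).symm)
  · intro z hz z' hz' hne w hw hw'
    rw [mem_PsiM] at hz hz'
    obtain ⟨p, hp, hzp⟩ := hz
    obtain ⟨q, hq, hzq⟩ := hz'
    have hwz : piMap G W w ∈ iota p := by
      rw [← hzp]; exact Sym2.mem_map.2 ⟨w, hw, rfl⟩
    have hwz' : piMap G W w ∈ iota q := by
      rw [← hzq]; exact Sym2.mem_map.2 ⟨w, hw', rfl⟩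
    rw [iota, Sym2.mem_iff] at hwz hwz'
    have hpq : p = q := by
      rcases hwz with h1 | h1 <;> rcases hwz' with h2 | h2
      · exact hPg.2 p hp q hq (by rw [← Sum.inl.injEq, ← h1, ← h2])
      · exact absurd (h2 ▸ h1) (by simp)
      · exact absurd (h1 ▸ h2) (by simp)
      · exact edgeFun_of_P0 hP p hp q hq (by rw [← Sum.inr.injEq, ← h1, ← h2])
    subst hpq
    exact hne (Sym2.map.injective piMap_injective (by rw [hzp, hzq]))

end LHS

end Dev6


section Dev7
set_option linter.unusedSectionVars false
open Polynomial
variable [Fintype V] [DecidableEq V] {G : SimpleGraph V} [DecidableRel G.Adj]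
  {W : Finset V}

lemma PsiM_PhiM {M : Finset (Sym2 ↥(SD G W))}
    (hM : M ∈ matchings ((subdivision G).induce (SD G W))) :
    PsiM G W (PhiM G W M) = M := by
  ext z
  rw [mem_PsiM]
  constructor
  · rintro ⟨p, hp, hzp⟩
    rw [mem_PhiM] at hp
    obtain ⟨z', hz', hz'p⟩ := mem_image.1 hp
    have : z = z' := Sym2.map.injective piMap_injective (by rw [hzp, hz'p])
    rw [this]; exact hz'
  · intro hz
    obtain ⟨p, hp1, hp2, hp3, hp4⟩ := edge_exists ((mem_matchings.1 hM).1 hz)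
    exact ⟨p, mem_PhiM.2 (mem_image.2 ⟨z, hz, hp4⟩), hp4⟩

lemma PhiM_PsiM {P : Finset (V × Sym2 V)}
    (hP : P ∈ (goodFlags G (outW W)).filter (fun P => doubled G P = ∅)) :
    PhiM G W (PsiM G W P) = P := by
  have hPg := (mem_filter.1 hP).1
  rw [mem_goodFlags] at hPg
  ext p
  rw [mem_PhiM]
  constructor
  · intro hp
    obtain ⟨z, hz, hzp⟩ := mem_image.1 hp
    rw [mem_PsiM] at hz
    obtain ⟨q, hq, hzq⟩ := hz
    have : q = p := iota_injective (by rw [← hzq, hzp])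
    rwa [← this]
  · intro hp
    have hpe := edgeFinset_of_mem_incidenceFinset (hPg.1 p hp).2
    have hW : p.1 ∉ W := by
      have := (hPg.1 p hp).1
      rw [outW, mem_filter] at this
      exact this.2
    have he : p.2 ∈ G.edgeSet := SimpleGraph.mem_edgeFinset.1 hpe.1
    have hxmem : (Sum.inl p.1 : V ⊕ G.edgeSet) ∈ SD G W := by
      simp only [SD, Set.mem_setOf_eq]
      intro w hw hc
      injection hc with hc'
      exact hW (hc' ▸ hw)
    have hymem : (Sum.inr ⟨p.2, he⟩ : V ⊕ G.edgeSet) ∈ SD G W := by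
      simp only [SD, Set.mem_setOf_eq]
      intro w hw hc
      cases hc
    have hmapeq : Sym2.map (piMap G W) s((⟨Sum.inl p.1, hxmem⟩ : ↥(SD G W)),
        (⟨Sum.inr ⟨p.2, he⟩, hymem⟩ : ↥(SD G W))) = iota p := by
      rw [Sym2.map_pair_eq, iota]
      rfl
    refine mem_image.2 ⟨_, ?_, hmapeq⟩
    rw [mem_PsiM]
    exact ⟨p, hp, hmapeq⟩

lemma card_PhiM {M : Finset (Sym2 ↥(SD G W))}
    (hM : M ∈ matchings ((subdivision G).induce (SD G W))) :
    (PhiM G W M).card = M.card := by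
  have h1 : (PhiM G W M).image iota = M.image (Sym2.map (piMap G W)) := by
    ext z
    constructor
    · intro hz
      obtain ⟨p, hp, rfl⟩ := mem_image.1 hz
      exact mem_PhiM.1 hp
    · intro hz
      obtain ⟨z', hz', rfl⟩ := mem_image.1 hz
      obtain ⟨p, hp1, hp2, hp3, hp4⟩ := edge_exists ((mem_matchings.1 hM).1 hz')
      rw [hp4]
      exact mem_image.2 ⟨p, mem_PhiM.2 (mem_image.2 ⟨z', hz', hp4⟩), rfl⟩
  have h2 := card_image_of_injective (PhiM G W M) (iota_injective (V := V))
  have h3 := card_image_of_injective M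
    (Sym2.map.injective (piMap_injective (G := G) (W := W)))
  rw [← h2, h1, h3]

lemma card_SD : Fintype.card ↥(SD G W) = (outW W).card + G.edgeFinset.card := by
  rw [Fintype.card_of_subtype ((outW W).disjSum (univ : Finset G.edgeSet)) ?_]
  · rw [card_disjSum, card_univ]
    congr 1
    rw [SimpleGraph.edgeFinset, Set.toFinset_card]
  · intro x
    cases x with
    | inl a => simp [outW, SD]
    | inr e => simp [SD]

lemma card_V_split (W : Finset V) : Fintype.card V = (outW W).card + W.card := by
  have h := Finset.card_filter_add_card_filter_not
    (s := (univ : Finset V)) (p := fun v => v ∉ W)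
  have h2 : univ.filter (fun v => ¬ v ∉ W) = W := by
    ext v; simp [not_not]
  rw [h2] at h
  rw [← Finset.card_univ (α := V), ← h]
  rfl

lemma lhs_eq :
    (X : Polynomial ℝ) ^ (Fintype.card V) *
        matchPoly ((subdivision G).induce (SD G W)) =
      ∑ P ∈ (goodFlags G (outW W)).filter (fun P => doubled G P = ∅),
        (-1 : Polynomial ℝ) ^ P.card *
          X ^ (2 * (outW W).card + G.edgeFinset.card + W.card - 2 * P.card) := by
  rw [matchPoly, mul_sum]
  refine Finset.sum_nbij' (PhiM G W) (PsiM G W) (fun M hM => PhiM_mem_goodFlags hM)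
    (fun P hP => PsiM_mem_matchings hP) (fun M hM => PsiM_PhiM hM)
    (fun P hP => PhiM_PsiM hP) ?_
  intro M hM
  have hMe := (mem_matchings.1 hM).1
  have hnd : ∀ e ∈ M, ¬ e.IsDiag := fun e he =>
    SimpleGraph.not_isDiag_of_mem_edgeSet _ (SimpleGraph.mem_edgeFinset.1 (hMe he))
  have hcov : (covered M).card = 2 * M.card := card_covered hnd (mem_matchings.1 hM).2
  have hle : 2 * M.card ≤ Fintype.card ↥(SD G W) := by
    rw [← hcov]; exact card_le_univ _
  have hPc : (PhiM G W M).card = M.card := card_PhiM hM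
  rw [card_SD] at hle
  have hexp : Fintype.card V + (Fintype.card ↥(SD G W) - 2 * M.card) =
      2 * (outW W).card + G.edgeFinset.card + W.card - 2 * M.card := by
    rw [card_SD, card_V_split W]
    omega
  rw [hPc, ← hexp, pow_add]
  ring

theorem matchPoly_subdivision_deleted' (G : SimpleGraph V)
    [DecidableRel G.Adj] (W : Finset V) :
    Polynomial.X ^ (Fintype.card V) *
        matchPoly ((subdivision G).induce
          {x : V ⊕ G.edgeSet | ∀ w ∈ W, x ≠ Sum.inl w}) =
      Polynomial.X ^ (G.edgeFinset.card + W.card) *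
        MvPolynomial.aeval
          (fun v : {v : V | v ∉ W} =>
            (Polynomial.X ^ 2 - Polynomial.C (G.degree v.val : ℝ) : Polynomial ℝ))
          (mvMatch (G.induce {v : V | v ∉ W})) := by
  exact lhs_eq.trans (rhs_combination.symm.trans
    (congrArg (fun t => (Polynomial.X : Polynomial ℝ) ^
      (G.edgeFinset.card + W.card) * t) aeval_mvMatch.symm))

end Dev7

/-- For any subset `W ⊆ V(G)`,
`𝓜(S(G)−W, x) = x^{|E(G)|−|V(G)|+|W|} · f(x)` where `f` is obtained from the multivariate
matching polynomial `𝔐(G−W)` by the substitution `x_v := x² − d_G(v)`.  Since the exponent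
`|E(G)|−|V(G)|+|W|` may be negative, the identity is stated equivalently (multiplying both
sides by `x^{|V(G)|}`) as a polynomial identity with exponents `|V(G)|` and `|E(G)|+|W|`. -/
theorem matchPoly_subdivision_deleted [Fintype V] [DecidableEq V] (G : SimpleGraph V)
    [DecidableRel G.Adj] (W : Finset V) :
    Polynomial.X ^ (Fintype.card V) *
        matchPoly ((subdivision G).induce
          {x : V ⊕ G.edgeSet | ∀ w ∈ W, x ≠ Sum.inl w}) =
      Polynomial.X ^ (G.edgeFinset.card + W.card) *
        MvPolynomial.aeval
          (fun v : {v : V | v ∉ W} =>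
            (Polynomial.X ^ 2 - Polynomial.C (G.degree v.val : ℝ) : Polynomial ℝ))
          (mvMatch (G.induce {v : V | v ∉ W})) :=
  matchPoly_subdivision_deleted' G W

end LM
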